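/- Let f: T → T be a train track map with stretch factor λ_f representing φ, and let T_∞ be the limit ℝ-tree of the sequence of rescaled metrics d_n(x,y) = d_T(f^n(x), f^n(y))/λ_f^n. Then the action of G on T_∞ is non-trivial, i.e., no point of T_∞ is fixed by all of G. -/

import Mathlib

/-!
Common vocabulary for relative train track theory on free products
`G = H₁ * ⋯ * H_p * F_k`, following Bestvina–Handel, Dahmani–Li and Mutanguha.
-/

open scoped Classical

namespace RelTT

section GroupDefs

variable (G : Type) [Group G]

/-- The conjugate subgroup `g K g⁻¹`. -/
def conjSub (g : G) (K : Subgroup G) : Subgroup G :=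
  Subgroup.map (MulAut.conj g).toMonoidHom K

/-- The family consisting of the subgroups `H i` together with a free group of rank `k`. -/
def factorFamily (p k : ℕ) (H : Fin p → Subgroup G) : Fin p ⊕ Unit → Type :=
  fun j => Sum.elim (fun i => ↥(H i)) (fun _ => FreeGroup (Fin k)) j

instance factorFamilyGroup (p k : ℕ) (H : Fin p → Subgroup G) :
    (j : Fin p ⊕ Unit) → Group (factorFamily G p k H j)
  | Sum.inl i => inferInstanceAs (Group ↥(H i))
  | Sum.inr _ => inferInstanceAs (Group (FreeGroup (Fin k)))

/-- The canonical homomorphism from the abstract free product of the `H i` and the free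
group of rank `k` (with prescribed images `a` of the free basis) to `G`. -/
noncomputable def decompHom (p k : ℕ) (H : Fin p → Subgroup G) (a : Fin k → G) :
    Monoid.CoprodI (factorFamily G p k H) →* G :=
  Monoid.CoprodI.lift fun j =>
    match j with
    | Sum.inl i => ((H i).subtype : factorFamily G p k H (Sum.inl i) →* G)
    | Sum.inr u => (FreeGroup.lift a : factorFamily G p k H (Sum.inr u) →* G)

/-- `G = H₁ * ⋯ * H_p * F_k`, where the free factor `F_k` is the free group on the
(free basis) images `a : Fin k → G`. -/
noncomputable def IsFreeProductDecomp (p k : ℕ) (H : Fin p → Subgroup G) (a : Fin k → G) : Prop :=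
  Function.Bijective (decompHom G p k H a)

/-- `φ` is strictly type-preserving relative to `𝒢 = {[H₁],…,[H_p]}`: it sends each
conjugate of each `H i` onto a conjugate of some `H j`. -/
def StrictlyTypePreserving {p : ℕ} (H : Fin p → Subgroup G) (φ : G →* G) : Prop :=
  ∀ (i : Fin p) (g : G), ∃ (j : Fin p) (g' : G),
    Subgroup.map φ (conjSub G g (H i)) = conjSub G g' (H j)

/-- The system of conjugacy classes of `H` is dominated by that of `K`: each `H i` is
conjugate into some `K j`. -/
def SystemLE {p q : ℕ} (H : Fin p → Subgroup G) (K : Fin q → Subgroup G) : Prop :=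
  ∀ i, ∃ (j : Fin q) (g : G), H i ≤ conjSub G g (K j)

/-- The collection of conjugacy classes of the `K j` is `φ`-invariant. -/
def SystemInvariant {q : ℕ} (φ : G →* G) (K : Fin q → Subgroup G) : Prop :=
  ∀ j, ∃ (l : Fin q) (g : G), Subgroup.map φ (K j) ≤ conjSub G g (K l)

/-- `φ` is irreducible relative to `𝒢 = {[H₁],…,[H_p]}`: there is no proper `φ`-invariant
free factor system of `G` strictly containing `𝒢`. -/
noncomputable def IrreducibleRel {p : ℕ} (H : Fin p → Subgroup G) (φ : G →* G) : Prop :=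
  ¬ ∃ (q k' : ℕ) (K : Fin q → Subgroup G) (b : Fin k' → G),
      IsFreeProductDecomp G q k' K b ∧ SystemInvariant G φ K ∧
      SystemLE G H K ∧ ¬ SystemLE G K H ∧ (∀ j, K j ≠ ⊤)

/-- The `n`-th iterate of an endomorphism, as a monoid homomorphism. -/
def iterHom (φ : G →* G) : ℕ → (G →* G)
  | 0 => MonoidHom.id G
  | n + 1 => φ.comp (iterHom φ n)

/-- `φ` is fully irreducible relative to `𝒢`: every positive power of `φ` is irreducible
relative to `𝒢`. -/
noncomputable def FullyIrreducibleRel {p : ℕ} (H : Fin p → Subgroup G) (φ : G →* G) : Prop :=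
  ∀ n : ℕ, 0 < n → IrreducibleRel G H (iterHom G φ n)

end GroupDefs

/-- A metric simplicial `G`-tree: a simplicial tree with positive edge lengths and a
simplicial, length-preserving `G`-action. -/
structure GTree (G : Type) [Group G] where
  V : Type
  graph : SimpleGraph V
  isTree : graph.IsTree
  len : V → V → ℝ
  len_pos : ∀ {u v : V}, graph.Adj u v → 0 < len u v
  len_symm : ∀ u v : V, len u v = len v u
  act : G → V ≃ V
  act_one : act 1 = Equiv.refl V
  act_mul : ∀ (g h : G) (v : V), act (g * h) v = act g (act h v)
  act_adj : ∀ (g : G) {u v : V}, graph.Adj u v → graph.Adj (act g u) (act g v)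
  act_len : ∀ (g : G) (u v : V), len (act g u) (act g v) = len u v

namespace GTree

variable {G : Type} [Group G] (T : GTree G)

/-- The action of `g` as a graph homomorphism. -/
def actHom (g : G) : T.graph →g T.graph where
  toFun := ⇑(T.act g)
  map_rel' := fun h => T.act_adj g h

/-- The action of `g` on darts (oriented edges). -/
def dartAct (g : G) (d : T.graph.Dart) : T.graph.Dart :=
  ⟨(T.act g d.fst, T.act g d.snd), T.act_adj g d.adj⟩

/-- Two darts lie in the same `G`-orbit of (unoriented) edges. -/
def SameEdgeOrbit (d d' : T.graph.Dart) : Prop :=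
  ∃ g : G, T.dartAct g d = d' ∨ T.dartAct g d = d'.symm

/-- The stabilizer of a vertex. -/
def stab (v : T.V) : Subgroup G where
  carrier := {g : G | T.act g v = v}
  one_mem' := by
    show T.act 1 v = v
    rw [T.act_one]; rfl
  mul_mem' := by
    intro a b ha hb
    have ha' : T.act a v = v := ha
    have hb' : T.act b v = v := hb
    show T.act (a * b) v = v
    rw [T.act_mul, hb', ha']
  inv_mem' := by
    intro a ha
    have ha' : T.act a v = v := ha
    show T.act a⁻¹ v = v
    calc T.act a⁻¹ v = T.act a⁻¹ (T.act a v) := by rw [ha']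
      _ = T.act (a⁻¹ * a) v := (T.act_mul _ _ _).symm
      _ = v := by rw [inv_mul_cancel, T.act_one]; rfl

/-- A vertex is non-free if it has nontrivial stabilizer. -/
def NonFree (v : T.V) : Prop :=
  ∃ g : G, g ≠ 1 ∧ T.act g v = v

/-- The geodesic (the unique embedded path) joining two vertices of the tree. -/
noncomputable def geodesic (u v : T.V) : T.graph.Walk u v :=
  (T.isTree.existsUnique_path u v).choose

/-- Tightening of a path: the geodesic joining its endpoints. -/
noncomputable def tighten {u v : T.V} (_w : T.graph.Walk u v) : T.graph.Walk u v :=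
  T.geodesic u v

/-- The metric length of a walk. -/
def walkLen {u v : T.V} (w : T.graph.Walk u v) : ℝ :=
  (w.darts.map fun d => T.len d.fst d.snd).sum

/-- A walk is reduced (without cancellation) if it has no backtracking. -/
def Reduced {u v : T.V} (w : T.graph.Walk u v) : Prop :=
  List.Chain' (fun d d' => d' ≠ d.symm) w.darts

end GTree

/-- Membership in the outer space `𝒯_𝒢` of `(G, 𝒢)` (conditions (0)–(3) of the paper). -/
structure InOuterSpace {G : Type} [Group G] {p : ℕ} (H : Fin p → Subgroup G)
    (T : GTree G) : Prop where
  /-- The action is nontrivial: no global fixed vertex. -/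
  nontrivial_action : ¬ ∃ v : T.V, ∀ g : G, T.act g v = v
  /-- The action is minimal: any nonempty invariant subtree is everything. -/
  minimal : ∀ S : Set T.V, S.Nonempty →
      (∀ (g : G) (v : T.V), v ∈ S → T.act g v ∈ S) →
      (∀ u ∈ S, ∀ v ∈ S, ∀ w : T.graph.Walk u v, w.IsPath → ∀ x ∈ w.support, x ∈ S) →
      S = Set.univ
  /-- Edge stabilizers are trivial. -/
  trivial_edge_stab : ∀ (g : G) (u v : T.V), T.graph.Adj u v →
      T.act g u = u → T.act g v = v → g = 1
  /-- There are finitely many orbits of edges. -/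
  fin_edge_orbits : ∃ (n : ℕ) (e : Fin n → T.graph.Dart),
      ∀ d : T.graph.Dart, ∃ i : Fin n, T.SameEdgeOrbit (e i) d
  /-- There are no redundant vertices. -/
  no_redundant : ∀ v : T.V, (T.graph.neighborSet v).ncard = 2 →
      (∀ g : G, T.act g v = v → ∀ u : T.V, T.graph.Adj v u → T.act g u = u) → False
  /-- Each conjugate of each `H i` fixes a unique vertex. -/
  fixed_vertices : ∀ (i : Fin p) (g : G), ∃! v : T.V, conjSub G g (H i) ≤ T.stab v
  /-- Vertex stabilizers are conjugates of the `H i`, all other vertices are free. -/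
  stabilizers : ∀ v : T.V,
      (∃ (i : Fin p) (g : G), T.stab v = conjSub G g (H i)) ∨ T.stab v = ⊥

/-- A `𝒢`-relative weak representative of an injective endomorphism `φ`: a `φ`-equivariant
map `f : T → T`, recorded by its values on vertices and the edge paths crossed by the images
of edges. -/
structure WeakRep {G : Type} [Group G] (φ : G →* G) (T : GTree G) where
  vmap : T.V → T.V
  emap : ∀ {u v : T.V}, T.graph.Adj u v → T.graph.Walk (vmap u) (vmap v)
  equivariant : ∀ (g : G) (v : T.V), vmap (T.act g v) = T.act (φ g) (vmap v)
  emap_equivariant : ∀ (g : G) {u v : T.V} (h : T.graph.Adj u v),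
      (emap (T.act_adj g h)).darts = ((emap h).map (T.actHom (φ g))).darts
  emap_symm : ∀ {u v : T.V} (h : T.graph.Adj u v),
      emap h.symm = (emap h).reverse

namespace WeakRep

variable {G : Type} [Group G] {φ : G →* G} {T : GTree G}

/-- The image path of a dart. -/
def dwalk (f : WeakRep φ T) (d : T.graph.Dart) :
    T.graph.Walk (f.vmap d.fst) (f.vmap d.snd) :=
  f.emap d.adj

/-- The image of a walk under the map `f`. -/
def mapWalk (f : WeakRep φ T) : ∀ {u v : T.V},
    T.graph.Walk u v → T.graph.Walk (f.vmap u) (f.vmap v)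
  | _, _, SimpleGraph.Walk.nil => SimpleGraph.Walk.nil
  | _, _, SimpleGraph.Walk.cons h p => (f.emap h).append (f.mapWalk p)

/-- The image of a walk under the `k`-th iterate `f^k`. -/
def mapWalkIter (f : WeakRep φ T) : (k : ℕ) → ∀ {u v : T.V},
    T.graph.Walk u v → T.graph.Walk (f.vmap^[k] u) (f.vmap^[k] v)
  | 0, _, _, w => w
  | k + 1, u, v, w =>
      (f.mapWalkIter k (f.mapWalk w)).copy
        (Function.iterate_succ_apply f.vmap k u).symm
        (Function.iterate_succ_apply f.vmap k v).symm

/-- `f` is tight: on each edge it is injective in the interior, i.e. the image of each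
edge is an embedded path (possibly a vertex). -/
def Tight (f : WeakRep φ T) : Prop :=
  ∀ d : T.graph.Dart, (f.dwalk d).IsPath

/-- Two darts with the same origin belong to the same gate if their images under `f` have
the same initial segment. -/
def gateEq (f : WeakRep φ T) (d d' : T.graph.Dart) : Prop :=
  d.fst = d'.fst ∧ (f.dwalk d).darts.head? = (f.dwalk d').darts.head?

/-- A turn is legal if the two darts issue from the same vertex but lie in distinct gates. -/
def LegalTurn (f : WeakRep φ T) (d d' : T.graph.Dart) : Prop :=
  d.fst = d'.fst ∧ (f.dwalk d).darts.head? ≠ (f.dwalk d').darts.head?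

/-- A walk is legal if every turn crossed is legal. -/
def LegalWalk (f : WeakRep φ T) {u v : T.V} (w : T.graph.Walk u v) : Prop :=
  List.Chain' (fun d d' => f.LegalTurn d.symm d') w.darts

/-- `f` is a train track map: edges are sent to nondegenerate legal paths, and legal
turns are sent to legal turns. -/
structure IsTrainTrack (f : WeakRep φ T) : Prop where
  edges_nondegenerate : ∀ d : T.graph.Dart, 0 < (f.dwalk d).length
  edges_legal : ∀ d : T.graph.Dart, f.LegalWalk (f.dwalk d)
  turns_legal : ∀ d d' : T.graph.Dart, f.LegalTurn d d' →
    ∀ x y : T.graph.Dart, (f.dwalk d).darts.head? = some x →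
      (f.dwalk d').darts.head? = some y → f.LegalTurn x y

/-- Every point of the tree is in the image of `f` (surjectivity of a simplicial map,
expressed by saying that every edge is crossed by the image of some edge). -/
def CoversAll (f : WeakRep φ T) : Prop :=
  ∀ d : T.graph.Dart, ∃ d' : T.graph.Dart,
    d ∈ (f.dwalk d').darts ∨ d.symm ∈ (f.dwalk d').darts

/-- The number of illegal turns of a walk. -/
noncomputable def illegalCount (f : WeakRep φ T) {u v : T.V} (w : T.graph.Walk u v) : ℕ :=
  (w.darts.zip w.darts.tail).countP fun q => decide (¬ f.LegalTurn q.1.symm q.2)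

/-- `ρ` satisfies the Nielsen condition with period `n`: `[f^n(ρ)] = g·ρ` for some `g ∈ G`. -/
noncomputable def NielsenPeriod (f : WeakRep φ T) {u v : T.V} (ρ : T.graph.Walk u v)
    (n : ℕ) : Prop :=
  ∃ g : G, f.vmap^[n] u = T.act g u ∧ f.vmap^[n] v = T.act g v ∧
    (T.tighten (f.mapWalkIter n ρ)).darts = (ρ.map (T.actHom g)).darts

/-- A Nielsen path: a geodesic `ρ` with `[f^N(ρ)] = g·ρ` for some `N > 0`, `g ∈ G`. -/
noncomputable def IsNielsen (f : WeakRep φ T) {u v : T.V} (ρ : T.graph.Walk u v) : Prop :=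
  ρ.IsPath ∧ ∃ n : ℕ, 0 < n ∧ f.NielsenPeriod ρ n

/-- A pre-Nielsen path: `[f^N(ρ)] = g·ρ` for some `N > 0`, `g ∈ G`. -/
noncomputable def IsPreNielsen (f : WeakRep φ T) {u v : T.V} (ρ : T.graph.Walk u v) : Prop :=
  ∃ n : ℕ, 0 < n ∧ f.NielsenPeriod ρ n

/-- An indivisible Nielsen path: a Nielsen path which is not a concatenation of
shorter Nielsen paths. -/
noncomputable def IsIndivisibleNielsen (f : WeakRep φ T) {u v : T.V}
    (ρ : T.graph.Walk u v) : Prop :=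
  f.IsNielsen ρ ∧ ¬ ∃ (x : T.V) (ρ₁ : T.graph.Walk u x) (ρ₂ : T.graph.Walk x v),
    ρ = ρ₁.append ρ₂ ∧ 0 < ρ₁.length ∧ 0 < ρ₂.length ∧ f.IsNielsen ρ₁ ∧ f.IsNielsen ρ₂

/-- An indivisible pre-Nielsen path. -/
noncomputable def IsIndivisiblePreNielsen (f : WeakRep φ T) {u v : T.V}
    (ρ : T.graph.Walk u v) : Prop :=
  f.IsPreNielsen ρ ∧ ¬ ∃ (x : T.V) (ρ₁ : T.graph.Walk u x) (ρ₂ : T.graph.Walk x v),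
    ρ = ρ₁.append ρ₂ ∧ 0 < ρ₁.length ∧ 0 < ρ₂.length ∧
      f.IsPreNielsen ρ₁ ∧ f.IsPreNielsen ρ₂

end WeakRep

/-- `e` is a complete set of representatives of the `G`-orbits of edges of `T`. -/
def IsEdgeReps {G : Type} [Group G] (T : GTree G) {m : ℕ} (e : Fin m → T.graph.Dart) : Prop :=
  ∀ d : T.graph.Dart, ∃! i : Fin m, T.SameEdgeOrbit (e i) d

/-- The transition matrix of `f` with respect to the edge-orbit representatives `e`:
its `(i,j)` entry is the number of times `f (e j)` crosses a translate of `e i`. -/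
noncomputable def transitionMatrix {G : Type} [Group G] {φ : G →* G} {T : GTree G}
    (f : WeakRep φ T) {m : ℕ} (e : Fin m → T.graph.Dart) : Matrix (Fin m) (Fin m) ℝ :=
  fun i j => ((f.dwalk (e j)).darts.countP fun d => decide (T.SameEdgeOrbit (e i) d) : ℕ)

/-- A nonnegative square matrix is irreducible. -/
def MatrixIrreducible {m : ℕ} (A : Matrix (Fin m) (Fin m) ℝ) : Prop :=
  ∀ i j : Fin m, ∃ n : ℕ, 0 < n ∧ 0 < (A ^ n) i j

/-- `lam` is the Perron–Frobenius eigenvalue of `A`: it admits a positive eigenvector. -/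
def IsPFEigenvalue {m : ℕ} (A : Matrix (Fin m) (Fin m) ℝ) (lam : ℝ) : Prop :=
  ∃ u : Fin m → ℝ, (∀ i, 0 < u i) ∧ A.mulVec u = lam • u

/-- `f` is `𝒢`-irreducible: its transition matrix is irreducible. -/
noncomputable def GIrreducible {G : Type} [Group G] {φ : G →* G} {T : GTree G}
    (f : WeakRep φ T) {m : ℕ} (e : Fin m → T.graph.Dart) : Prop :=
  MatrixIrreducible (transitionMatrix f e)

/-- `SplitsAs w l` records that the walk `w` is the concatenation of the (nonempty) list
of walks `l`. -/
inductive SplitsAs {G : Type} [Group G] (T : GTree G) :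
    ∀ {u v : T.V}, T.graph.Walk u v → List (Σ u v : T.V, T.graph.Walk u v) → Prop
  | single {u v : T.V} (w : T.graph.Walk u v) : SplitsAs T w [⟨u, v, w⟩]
  | cons {u x v : T.V} (w₁ : T.graph.Walk u x) {w₂ : T.graph.Walk x v}
      {l : List (Σ u v : T.V, T.graph.Walk u v)} :
      SplitsAs T w₂ l → SplitsAs T (w₁.append w₂) (⟨u, x, w₁⟩ :: l)

/-- `C` is a bounded cancellation constant for `f`: for any reduced concatenation
`ρ = α·β`, tightening the image `f(ρ)` cancels at most a length `C` at the
concatenation point. -/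
noncomputable def IsBCC {G : Type} [Group G] {φ : G →* G} {T : GTree G}
    (f : WeakRep φ T) (C : ℝ) : Prop :=
  ∀ {a b c : T.V} (α : T.graph.Walk a b) (β : T.graph.Walk b c),
    T.Reduced (α.append β) →
    ∃ (x : T.V) (α₁ : T.graph.Walk (f.vmap a) x) (u : T.graph.Walk x (f.vmap b))
      (β₁ : T.graph.Walk x (f.vmap c)),
      T.tighten (f.mapWalk α) = α₁.append u ∧
      T.tighten (f.mapWalk β) = u.reverse.append β₁ ∧
      T.tighten (f.mapWalk (α.append β)) = α₁.append β₁ ∧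
      T.walkLen u ≤ C


section Proof15Aux

open SimpleGraph

variable {G : Type} [Group G]

namespace GTree

variable (T : GTree G)

lemma act_apply_one (v : T.V) : T.act 1 v = v := by rw [T.act_one]; rfl

lemma act_act (g h : G) (v : T.V) : T.act g (T.act h v) = T.act (g * h) v :=
  (T.act_mul g h v).symm

lemma act_inv_act (g : G) (v : T.V) : T.act g⁻¹ (T.act g v) = v := by
  rw [act_act, inv_mul_cancel, act_apply_one]

@[simp] lemma dartAct_fst (g : G) (d : T.graph.Dart) :
    (T.dartAct g d).fst = T.act g d.fst := rfl

@[simp] lemma dartAct_snd (g : G) (d : T.graph.Dart) :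
    (T.dartAct g d).snd = T.act g d.snd := rfl

lemma dartAct_symm (g : G) (d : T.graph.Dart) :
    T.dartAct g d.symm = (T.dartAct g d).symm := by
  apply SimpleGraph.Dart.ext
  rfl

lemma dartAct_one (d : T.graph.Dart) : T.dartAct 1 d = d := by
  apply SimpleGraph.Dart.ext
  have h1 : ∀ v : T.V, T.act 1 v = v := T.act_apply_one
  show (T.act 1 d.fst, T.act 1 d.snd) = d.toProd
  rw [h1, h1]

lemma dartAct_dartAct (g h : G) (d : T.graph.Dart) :
    T.dartAct g (T.dartAct h d) = T.dartAct (g * h) d := by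
  apply SimpleGraph.Dart.ext
  show (T.act g (T.act h d.fst), T.act g (T.act h d.snd)) = (T.act (g*h) d.fst, T.act (g*h) d.snd)
  rw [T.act_act, T.act_act]

lemma sameEdgeOrbit_symm_right (e0 d : T.graph.Dart) :
    T.SameEdgeOrbit e0 d.symm ↔ T.SameEdgeOrbit e0 d := by
  constructor
  · rintro ⟨g, h | h⟩
    · exact ⟨g, Or.inr h⟩
    · exact ⟨g, Or.inl (by rw [h, SimpleGraph.Dart.symm_symm])⟩
  · rintro ⟨g, h | h⟩
    · exact ⟨g, Or.inr (by rw [h]; exact (SimpleGraph.Dart.symm_symm d).symm)⟩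
    · exact ⟨g, Or.inl h⟩

lemma sameEdgeOrbit_dartAct (g : G) (e0 d : T.graph.Dart) :
    T.SameEdgeOrbit e0 (T.dartAct g d) ↔ T.SameEdgeOrbit e0 d := by
  constructor
  · rintro ⟨h, hh | hh⟩
    · exact ⟨g⁻¹ * h, Or.inl (by
        rw [← T.dartAct_dartAct, hh, T.dartAct_dartAct, inv_mul_cancel, T.dartAct_one])⟩
    · exact ⟨g⁻¹ * h, Or.inr (by
        rw [← T.dartAct_dartAct, hh, ← T.dartAct_symm, T.dartAct_dartAct, inv_mul_cancel,
          T.dartAct_one])⟩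
  · rintro ⟨h, hh | hh⟩
    · exact ⟨g * h, Or.inl (by rw [← T.dartAct_dartAct, hh])⟩
    · exact ⟨g * h, Or.inr (by rw [← T.dartAct_dartAct, hh, T.dartAct_symm])⟩

lemma sameEdgeOrbit_self (d : T.graph.Dart) : T.SameEdgeOrbit d d :=
  ⟨1, Or.inl (T.dartAct_one d)⟩

lemma geodesic_isPath (u v : T.V) : (T.geodesic u v).IsPath :=
  (T.isTree.existsUnique_path u v).choose_spec.1

lemma geodesic_unique {u v : T.V} (w : T.graph.Walk u v) (hw : w.IsPath) :
    w = T.geodesic u v :=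
  (T.isTree.existsUnique_path u v).choose_spec.2 w hw

lemma walkLen_nonneg {u v : T.V} (w : T.graph.Walk u v) : 0 ≤ T.walkLen w := by
  apply List.sum_nonneg
  intro a ha
  obtain ⟨d, hd, rfl⟩ := List.mem_map.1 ha
  exact (T.len_pos d.adj).le

lemma walkLen_append {u v w : T.V} (p : T.graph.Walk u v) (q : T.graph.Walk v w) :
    T.walkLen (p.append q) = T.walkLen p + T.walkLen q := by
  unfold walkLen
  rw [SimpleGraph.Walk.darts_append, List.map_append, List.sum_append]

lemma walkLen_reverse {u v : T.V} (p : T.graph.Walk u v) :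
    T.walkLen p.reverse = T.walkLen p := by
  unfold walkLen
  rw [SimpleGraph.Walk.darts_reverse, List.map_reverse, List.sum_reverse, List.map_map]
  congr 1
  apply List.map_congr_left
  intro d _
  exact T.len_symm d.snd d.fst

lemma walkLen_map_act (g : G) {u v : T.V} (p : T.graph.Walk u v) :
    T.walkLen (p.map (T.actHom g)) = T.walkLen p := by
  unfold walkLen
  rw [SimpleGraph.Walk.darts_map, List.map_map]
  congr 1
  apply List.map_congr_left
  intro d _
  exact T.act_len g d.fst d.snd

lemma geodesic_walkLen_le {u v : T.V} (w : T.graph.Walk u v) :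
    T.walkLen (T.geodesic u v) ≤ T.walkLen w := by
  rw [← T.geodesic_unique w.bypass (SimpleGraph.Walk.bypass_isPath w)]
  have hnd : w.bypass.darts.Nodup :=
    SimpleGraph.Walk.darts_nodup_of_support_nodup (SimpleGraph.Walk.bypass_isPath w).support_nodup
  obtain ⟨l, hperm, hsl⟩ :=
    List.subperm_of_subset hnd (SimpleGraph.Walk.darts_bypass_subset w)
  calc T.walkLen w.bypass = (l.map fun d => T.len d.fst d.snd).sum :=
        (List.Perm.sum_eq (hperm.map _)).symm
    _ ≤ T.walkLen w := by
        apply List.Sublist.sum_le_sum (hsl.map _)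
        intro a ha
        obtain ⟨d, hd, rfl⟩ := List.mem_map.1 ha
        exact (T.len_pos d.adj).le

lemma geodesic_len_symm (u v : T.V) :
    T.walkLen (T.geodesic u v) = T.walkLen (T.geodesic v u) := by
  rw [← T.geodesic_unique (T.geodesic v u).reverse ((T.geodesic_isPath v u).reverse),
    T.walkLen_reverse]

lemma geodesic_triangle (a b c : T.V) :
    T.walkLen (T.geodesic a c) ≤ T.walkLen (T.geodesic a b) + T.walkLen (T.geodesic b c) := by
  have h := T.geodesic_walkLen_le ((T.geodesic a b).append (T.geodesic b c))
  rwa [T.walkLen_append] at h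

lemma geodesic_len_act (g : G) (a b : T.V) :
    T.walkLen (T.geodesic (T.act g a) (T.act g b)) = T.walkLen (T.geodesic a b) := by
  have hinj : Function.Injective (T.actHom g) := (T.act g).injective
  have : (T.geodesic a b).map (T.actHom g) = T.geodesic (T.act g a) (T.act g b) :=
    T.geodesic_unique _ (SimpleGraph.Walk.map_isPath_of_injective hinj (T.geodesic_isPath a b))
  rw [← this]
  exact T.walkLen_map_act g (T.geodesic a b)

end GTree

end Proof15Aux
section Proof15Aux2

open SimpleGraph

variable {G : Type} [Group G]

namespace GTree

variable (T : GTree G)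

lemma reduced_isPath : ∀ {u v : T.V} (w : T.graph.Walk u v), T.Reduced w → w.IsPath := by
  intro u v w
  induction w with
  | nil => intro _; exact SimpleGraph.Walk.IsPath.nil
  | @cons u x v h p ih =>
    intro hred
    have hredp : T.Reduced p := by
      have := (hred : List.Chain' _ _)
      unfold GTree.Reduced
      exact List.IsChain.tail this
    have hp : p.IsPath := ih hredp
    rw [SimpleGraph.Walk.cons_isPath_iff]
    refine ⟨hp, fun hu => ?_⟩
    -- u ∈ p.support; build a cycle
    have hq : (p.takeUntil u hu).IsPath := hp.takeUntil hu
    have hedge : s(u, x) ∉ (p.takeUntil u hu).edges := by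
      intro hmem
      have hmem' : s(u, x) ∈ p.edges := SimpleGraph.Walk.edges_takeUntil_subset p hu hmem
      -- p is a path from x; analyze its first edge
      cases p with
      | nil => simp at hmem'
      | @cons x w0 v h' p' =>
        rw [SimpleGraph.Walk.edges_cons, List.mem_cons] at hmem'
        rcases hmem' with hfirst | hrest
        · -- first edge of p is {u, x}, so first dart of p is (x, u) = d0.symm
          rw [Sym2.eq_iff] at hfirst
          have hw0 : w0 = u := by
            rcases hfirst with ⟨h1, h2⟩ | ⟨h1, -⟩
            · exact absurd h1 h.ne
            · exact h1.symm
          subst hw0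
          -- contradiction with reducedness of (cons h (cons h' p'))
          have hch := hred
          unfold GTree.Reduced at hch
          rw [SimpleGraph.Walk.darts_cons, SimpleGraph.Walk.darts_cons] at hch
          have := (List.isChain_cons_cons.1 hch).1
          apply this
          apply SimpleGraph.Dart.ext
          rfl
        · -- {u,x} in p'.edges, so x ∈ p'.support, contradicting path
          have hxmem : x ∈ p'.support := SimpleGraph.Walk.snd_mem_support_of_mem_edges p' hrest
          rw [SimpleGraph.Walk.cons_isPath_iff] at hp
          exact hp.2 hxmem
    have hcyc : (SimpleGraph.Walk.cons h (p.takeUntil u hu)).IsCycle :=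
      (SimpleGraph.Walk.cons_isCycle_iff _ h).2 ⟨hq, hedge⟩
    exact T.isTree.IsAcyclic _ hcyc

end GTree

end Proof15Aux2
section Proof15Aux3

open SimpleGraph

variable {G : Type} [Group G]

lemma head?_append_left_aux {α : Type} (l1 l2 : List α) (h : l1 ≠ []) :
    (l1 ++ l2).head? = l1.head? := by
  cases l1 with
  | nil => exact absurd rfl h
  | cons a t => rfl

namespace WeakRep

variable {φ : G →* G} {T : GTree G} (f : WeakRep φ T)

lemma dwalk_dartAct_darts (g : G) (d : T.graph.Dart) :
    (f.dwalk (T.dartAct g d)).darts = ((f.dwalk d).map (T.actHom (φ g))).darts :=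
  f.emap_equivariant g d.adj

lemma dwalk_symm (d : T.graph.Dart) : f.dwalk d.symm = (f.dwalk d).reverse :=
  f.emap_symm d.adj

lemma head?_darts_dwalk_symm (d : T.graph.Dart) :
    (f.dwalk d.symm).darts.head?
      = ((f.dwalk d).darts.getLast?).map SimpleGraph.Dart.symm := by
  rw [show (f.dwalk d.symm).darts = (f.dwalk d).reverse.darts by rw [f.dwalk_symm]; rfl,
    SimpleGraph.Walk.darts_reverse, List.head?_reverse, List.getLast?_map]

lemma dwalk_darts_ne_nil (hf : f.IsTrainTrack) (d : T.graph.Dart) :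
    (f.dwalk d).darts ≠ [] := by
  have h := hf.edges_nondegenerate d
  intro hnil
  rw [← SimpleGraph.Walk.length_darts, hnil] at h
  simp at h

lemma reduced_of_legal {u v : T.V} {w : T.graph.Walk u v} (hw : f.LegalWalk w) :
    T.Reduced w := by
  refine List.IsChain.imp ?_ hw
  intro d d' hldd heq
  apply hldd.2
  rw [heq]

lemma legalWalk_mapWalk (hf : f.IsTrainTrack) :
    ∀ {u v : T.V} (w : T.graph.Walk u v), f.LegalWalk w → f.LegalWalk (f.mapWalk w) := by
  intro u v w
  induction w with
  | nil => intro _; exact List.isChain_nil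
  | @cons u x v h p ih =>
    intro hw
    have hw' : List.Chain' (fun d d' => f.LegalTurn d.symm d')
        (SimpleGraph.Dart.mk (u, x) h :: p.darts) := hw
    have hwp : f.LegalWalk p := hw'.tail
    have hmp := ih hwp
    show f.LegalWalk ((f.emap h).append (f.mapWalk p))
    unfold LegalWalk
    rw [SimpleGraph.Walk.darts_append]
    show List.IsChain _ _
    rw [List.isChain_append]
    refine ⟨hf.edges_legal ⟨(u, x), h⟩, hmp, ?_⟩
    intro dlast hlast y hy
    have hlast' : (f.dwalk ⟨(u, x), h⟩).darts.getLast? = some dlast := hlast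
    cases p with
    | nil => simp [WeakRep.mapWalk] at hy
    | @cons x y' v h' p' =>
      have hy0 : (f.mapWalk (SimpleGraph.Walk.cons h' p')).darts.head? = some y := hy
      have heq : (f.mapWalk (SimpleGraph.Walk.cons h' p')).darts
          = (f.dwalk ⟨(x, y'), h'⟩).darts ++ (f.mapWalk p').darts := by
        show ((f.emap h').append (f.mapWalk p')).darts = _
        exact SimpleGraph.Walk.darts_append _ _
      rw [heq, head?_append_left_aux _ _ (f.dwalk_darts_ne_nil hf ⟨(x, y'), h'⟩)] at hy0
      have hturn : f.LegalTurn (SimpleGraph.Dart.mk (u, x) h).symm ⟨(x, y'), h'⟩ :=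
        (List.isChain_cons_cons.1 hw').1
      have hxhead : (f.dwalk (SimpleGraph.Dart.mk (u, x) h).symm).darts.head?
          = some dlast.symm := by
        rw [f.head?_darts_dwalk_symm, hlast']
        rfl
      exact hf.turns_legal _ _ hturn dlast.symm y hxhead hy0

lemma legalWalk_mapWalkIter (hf : f.IsTrainTrack) :
    ∀ (n : ℕ) {u v : T.V} (w : T.graph.Walk u v),
      f.LegalWalk w → f.LegalWalk (f.mapWalkIter n w) := by
  intro n
  induction n with
  | zero => intro u v w hw; exact hw
  | succ n ih =>
    intro u v w hw
    show f.LegalWalk ((f.mapWalkIter n (f.mapWalk w)).copy _ _)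
    unfold LegalWalk
    rw [SimpleGraph.Walk.darts_copy]
    exact ih _ (f.legalWalk_mapWalk hf w hw)

end WeakRep

end Proof15Aux3
section Proof15Aux4

open SimpleGraph

variable {G : Type} [Group G]

namespace GTree

variable (T : GTree G)

lemma countP_darts_map_act (g : G) {u v : T.V} (p : T.graph.Walk u v) (d0 : T.graph.Dart) :
    ((p.map (T.actHom g)).darts.countP fun d => decide (T.SameEdgeOrbit d0 d))
      = p.darts.countP fun d => decide (T.SameEdgeOrbit d0 d) := by
  rw [SimpleGraph.Walk.darts_map, List.countP_map]
  apply List.countP_congr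
  intro d _
  simp only [Function.comp_apply, decide_eq_true_eq]
  have hd : (T.actHom g).mapDart d = T.dartAct g d := SimpleGraph.Dart.ext _ _ rfl
  rw [hd]
  exact T.sameEdgeOrbit_dartAct g d0 d

lemma sameEdgeOrbit_reps_iff {m : ℕ} {e : Fin m → T.graph.Dart} (hreps : RelTT.IsEdgeReps T e)
    (i j : Fin m) : T.SameEdgeOrbit (e i) (e j) ↔ i = j := by
  obtain ⟨j', _, huf⟩ := hreps (e j)
  have hj : j = j' := huf j (T.sameEdgeOrbit_self (e j))
  constructor
  · intro hij
    rw [huf i hij, ← hj]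
  · rintro rfl
    exact T.sameEdgeOrbit_self _

end GTree

namespace WeakRep

variable {φ : G →* G} {T : GTree G} (f : WeakRep φ T)

lemma countP_darts_dwalk_symm (d0 d : T.graph.Dart) :
    ((f.dwalk d.symm).darts.countP fun d' => decide (T.SameEdgeOrbit d0 d'))
      = (f.dwalk d).darts.countP fun d' => decide (T.SameEdgeOrbit d0 d') := by
  rw [show (f.dwalk d.symm).darts = (f.dwalk d).reverse.darts by rw [f.dwalk_symm]; rfl,
    SimpleGraph.Walk.darts_reverse, List.countP_reverse, List.countP_map]
  apply List.countP_congr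
  intro d' _
  simp only [Function.comp_apply, decide_eq_true_eq]
  exact T.sameEdgeOrbit_symm_right d0 d'

lemma countP_dwalk_orbit {m : ℕ} (e : Fin m → T.graph.Dart) (i j : Fin m) (d : T.graph.Dart)
    (hd : T.SameEdgeOrbit (e j) d) :
    ((f.dwalk d).darts.countP fun d' => decide (T.SameEdgeOrbit (e i) d'))
      = (f.dwalk (e j)).darts.countP fun d' => decide (T.SameEdgeOrbit (e i) d') := by
  obtain ⟨g, h | h⟩ := hd
  · rw [← h, f.dwalk_dartAct_darts, T.countP_darts_map_act]
  · have h2 : d = (T.dartAct g (e j)).symm := by rw [h, SimpleGraph.Dart.symm_symm]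
    rw [h2, ← T.dartAct_symm, f.dwalk_dartAct_darts, T.countP_darts_map_act,
      f.countP_darts_dwalk_symm]

lemma countP_edgeWalk {m : ℕ} {e : Fin m → T.graph.Dart} (hreps : RelTT.IsEdgeReps T e)
    (i j : Fin m) :
    ((SimpleGraph.Walk.cons (e j).adj SimpleGraph.Walk.nil).darts.countP
        fun d => decide (T.SameEdgeOrbit (e i) d))
      = if i = j then 1 else 0 := by
  have hdart : (SimpleGraph.Walk.cons (e j).adj SimpleGraph.Walk.nil).darts = [e j] := by
    rw [SimpleGraph.Walk.darts_cons, SimpleGraph.Walk.darts_nil]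
  rw [hdart, List.countP_cons, List.countP_nil]
  by_cases hij : i = j
  · subst hij
    simp [T.sameEdgeOrbit_self]
  · have hn : ¬ T.SameEdgeOrbit (e i) (e j) :=
      fun hc => hij ((T.sameEdgeOrbit_reps_iff hreps i j).1 hc)
    simp [hij, hn]

lemma countP_mapWalk {m : ℕ} {e : Fin m → T.graph.Dart} (hreps : RelTT.IsEdgeReps T e) :
    ∀ {u v : T.V} (w : T.graph.Walk u v) (i : Fin m),
    (((f.mapWalk w).darts.countP fun d => decide (T.SameEdgeOrbit (e i) d) : ℕ) : ℝ)
      = ∑ j, RelTT.transitionMatrix f e i j *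
          ((w.darts.countP fun d => decide (T.SameEdgeOrbit (e j) d) : ℕ) : ℝ) := by
  intro u v w
  induction w with
  | nil =>
    intro i
    simp [WeakRep.mapWalk, SimpleGraph.Walk.darts_nil]
  | @cons u x v h p ih =>
    intro i
    obtain ⟨j0, hj0, huniq⟩ := hreps ⟨(u, x), h⟩
    have hdarts : (f.mapWalk (SimpleGraph.Walk.cons h p)).darts
        = (f.dwalk ⟨(u, x), h⟩).darts ++ (f.mapWalk p).darts := by
      show ((f.emap h).append (f.mapWalk p)).darts = _
      exact SimpleGraph.Walk.darts_append _ _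
    have hcnt0 : ((f.dwalk ⟨(u, x), h⟩).darts.countP
          fun d => decide (T.SameEdgeOrbit (e i) d) : ℝ)
        = RelTT.transitionMatrix f e i j0 := by
      rw [f.countP_dwalk_orbit e i j0 _ hj0]
      rfl
    have hcons : ∀ j : Fin m,
        ((SimpleGraph.Walk.cons h p).darts.countP
            fun d => decide (T.SameEdgeOrbit (e j) d) : ℝ)
          = ((p.darts.countP fun d => decide (T.SameEdgeOrbit (e j) d) : ℕ) : ℝ)
            + (if j = j0 then 1 else 0) := by
      intro j
      rw [SimpleGraph.Walk.darts_cons, List.countP_cons]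
      push_cast
      congr 1
      by_cases hP : T.SameEdgeOrbit (e j) (⟨(u, x), h⟩ : T.graph.Dart)
      · simp [hP, huniq j hP, hj0]
      · have hne : j ≠ j0 := fun hh => hP (hh ▸ hj0)
        simp [hP, hne]
    rw [hdarts, List.countP_append]
    push_cast
    rw [ih i]
    have hsum : ∀ j, RelTT.transitionMatrix f e i j *
          (((SimpleGraph.Walk.cons h p).darts.countP
              fun d => decide (T.SameEdgeOrbit (e j) d) : ℕ) : ℝ)
        = RelTT.transitionMatrix f e i j *
            ((p.darts.countP fun d => decide (T.SameEdgeOrbit (e j) d) : ℕ) : ℝ)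
          + RelTT.transitionMatrix f e i j * (if j = j0 then 1 else 0) := by
      intro j
      rw [hcons j, mul_add]
    rw [Finset.sum_congr rfl fun j _ => hsum j, Finset.sum_add_distrib]
    have hdelta : (∑ j, RelTT.transitionMatrix f e i j * (if j = j0 then 1 else 0))
        = RelTT.transitionMatrix f e i j0 := by
      simp [Finset.sum_ite_eq']
    rw [hdelta, hcnt0]
    ring

end WeakRep

end Proof15Aux4
section Proof15Aux5

open SimpleGraph

variable {G : Type} [Group G]

namespace GTree

variable (T : GTree G)

lemma length_le_walkLen {u v : T.V} (w : T.graph.Walk u v) (L : ℝ)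
    (hL : ∀ d : T.graph.Dart, d ∈ w.darts → L ≤ T.len d.fst d.snd) :
    L * (w.darts.length : ℝ) ≤ T.walkLen w := by
  have h1 : (w.darts.map fun (_ : T.graph.Dart) => L).sum
      ≤ (w.darts.map fun d => T.len d.fst d.snd).sum :=
    List.sum_le_sum hL
  have h2 : (w.darts.map fun (_ : T.graph.Dart) => L).sum = (w.darts.length : ℝ) * L := by
    rw [List.map_const', List.sum_replicate, nsmul_eq_mul]
  unfold walkLen
  rw [mul_comm]
  rw [h2] at h1
  exact h1

end GTree

/-- The walk crossing a single dart. -/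
def edgeWalk (T : GTree G) (d : T.graph.Dart) : T.graph.Walk d.fst d.snd :=
  SimpleGraph.Walk.cons d.adj SimpleGraph.Walk.nil

namespace WeakRep

variable {φ : G →* G} {T : GTree G} (f : WeakRep φ T)

lemma legalWalk_edgeWalk (d : T.graph.Dart) : f.LegalWalk (RelTT.edgeWalk T d) := by
  show List.Chain' _ ((RelTT.edgeWalk T d).darts)
  have : (RelTT.edgeWalk T d).darts = [d] := by
    show _ :: _ = _
    rw [SimpleGraph.Walk.darts_nil]
  rw [this]
  exact List.isChain_singleton d

lemma countP_edgeWalk' {m : ℕ} {e : Fin m → T.graph.Dart} (hreps : RelTT.IsEdgeReps T e)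
    (i j : Fin m) :
    (((RelTT.edgeWalk T (e j)).darts.countP
        fun d => decide (T.SameEdgeOrbit (e i) d) : ℕ) : ℝ)
      = (Pi.single j 1 : Fin m → ℝ) i := by
  unfold RelTT.edgeWalk
  rw [countP_edgeWalk hreps i j, Pi.single_apply]
  by_cases h : i = j <;> simp [h]

lemma countP_mapWalkIter {m : ℕ} {e : Fin m → T.graph.Dart} (hreps : RelTT.IsEdgeReps T e) :
    ∀ (n : ℕ) {u v : T.V} (w : T.graph.Walk u v) (i : Fin m),
    (((f.mapWalkIter n w).darts.countP fun d => decide (T.SameEdgeOrbit (e i) d) : ℕ) : ℝ)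
      = ((RelTT.transitionMatrix f e) ^ n).mulVec
          (fun j => ((w.darts.countP fun d => decide (T.SameEdgeOrbit (e j) d) : ℕ) : ℝ)) i := by
  intro n
  induction n with
  | zero =>
    intro u v w i
    show ((w.darts.countP _ : ℕ) : ℝ) = _
    rw [pow_zero, Matrix.one_mulVec]
  | succ n ih =>
    intro u v w i
    have hdc : (f.mapWalkIter (n + 1) w).darts = (f.mapWalkIter n (f.mapWalk w)).darts := by
      show ((f.mapWalkIter n (f.mapWalk w)).copy _ _).darts = _
      exact SimpleGraph.Walk.darts_copy _ _ _
    rw [hdc, ih (f.mapWalk w) i]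
    have hfun : (fun j =>
          (((f.mapWalk w).darts.countP fun d => decide (T.SameEdgeOrbit (e j) d) : ℕ) : ℝ))
        = (RelTT.transitionMatrix f e).mulVec
            (fun j => ((w.darts.countP fun d => decide (T.SameEdgeOrbit (e j) d) : ℕ) : ℝ)) := by
      funext j
      rw [f.countP_mapWalk hreps w j]
      simp [Matrix.mulVec, dotProduct]
    rw [hfun, Matrix.mulVec_mulVec, ← pow_succ]

lemma vmap_iter_act : ∀ (n : ℕ) (g : G), ∃ h : G, ∀ z : T.V,
    f.vmap^[n] (T.act g z) = T.act h (f.vmap^[n] z) := by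
  intro n
  induction n with
  | zero => intro g; exact ⟨g, fun z => rfl⟩
  | succ n ih =>
    intro g
    obtain ⟨h, hh⟩ := ih (φ g)
    refine ⟨h, fun z => ?_⟩
    rw [Function.iterate_succ_apply, Function.iterate_succ_apply, f.equivariant, hh]

end WeakRep

end Proof15Aux5
/-- Let `f : T → T` be a train track map with stretch factor `λ_f`
representing `φ`, and let `T_∞` be the limit ℝ-tree of the rescaled metrics
`d_n(x,y) = d_T(fⁿ(x), fⁿ(y))/λ_fⁿ`. Then the action of `G` on `T_∞` is non-trivial:
no point of `T_∞` is fixed by all of `G`. -/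
theorem limit_tree_action_nontrivial
    (G : Type) [Group G] (p k : ℕ) (H : Fin p → Subgroup G) (a : Fin k → G)
    (hdecomp : IsFreeProductDecomp G p k H a)
    (φ : G →* G) (hinj : Function.Injective φ)
    (hfull : FullyIrreducibleRel G H φ)
    (T : GTree G) (hT : InOuterSpace H T)
    (f : WeakRep φ T) (hf : f.IsTrainTrack)
    (m : ℕ) (e : Fin m → T.graph.Dart) (hreps : IsEdgeReps T e)
    (lam : ℝ) (hPF : IsPFEigenvalue (transitionMatrix f e) lam) (hlam : 1 < lam)
    (dinf : T.V → T.V → ℝ)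
    (hlim : ∀ x y : T.V,
      Filter.Tendsto
        (fun n : ℕ => T.walkLen (T.geodesic (f.vmap^[n] x) (f.vmap^[n] y)) / lam ^ n)
        Filter.atTop (nhds (dinf x y))) :
    ¬ ∃ x : T.V, ∀ g : G, dinf (T.act g x) x = 0 := by
  rintro ⟨x, hfix⟩
  obtain ⟨uPF, hupos, huPF⟩ := hPF
  have hlam0 : (0:ℝ) < lam := lt_trans zero_lt_one hlam
  have hlamn : ∀ n : ℕ, (0:ℝ) < lam ^ n := fun n => pow_pos hlam0 n
  -- basic properties of dinf
  have dnonneg : ∀ a b : T.V, 0 ≤ dinf a b := by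
    intro a b
    refine ge_of_tendsto (hlim a b) ?_
    filter_upwards with n
    exact div_nonneg (T.walkLen_nonneg _) (hlamn n).le
  have dsymm : ∀ a b : T.V, dinf a b = dinf b a := by
    intro a b
    have heq : (fun n : ℕ => T.walkLen (T.geodesic (f.vmap^[n] b) (f.vmap^[n] a)) / lam ^ n)
        = fun n : ℕ => T.walkLen (T.geodesic (f.vmap^[n] a) (f.vmap^[n] b)) / lam ^ n := by
      funext n
      rw [T.geodesic_len_symm]
    have h2 := hlim b a
    rw [heq] at h2
    exact tendsto_nhds_unique (hlim a b) h2
  have dtri : ∀ a b c : T.V, dinf a c ≤ dinf a b + dinf b c := by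
    intro a b c
    refine le_of_tendsto_of_tendsto' (hlim a c) ((hlim a b).add (hlim b c)) ?_
    intro n
    rw [← add_div]
    gcongr
    exact T.geodesic_triangle _ _ _
  have dact : ∀ (g : G) (a b : T.V), dinf (T.act g a) (T.act g b) = dinf a b := by
    intro g a b
    have heq : (fun n : ℕ =>
          T.walkLen (T.geodesic (f.vmap^[n] (T.act g a)) (f.vmap^[n] (T.act g b))) / lam ^ n)
        = fun n : ℕ => T.walkLen (T.geodesic (f.vmap^[n] a) (f.vmap^[n] b)) / lam ^ n := by
      funext n
      obtain ⟨h, hh⟩ := f.vmap_iter_act n g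
      rw [hh a, hh b, T.geodesic_len_act]
    have h2 := hlim (T.act g a) (T.act g b)
    rw [heq] at h2
    exact tendsto_nhds_unique h2 (hlim a b)
  have hfix2 : ∀ g1 g2 : G, dinf (T.act g1 x) (T.act g2 x) = 0 := by
    intro g1 g2
    have h1 : dinf (T.act g1 x) (T.act g2 x)
        = dinf (T.act g1⁻¹ (T.act g1 x)) (T.act g1⁻¹ (T.act g2 x)) := (dact g1⁻¹ _ _).symm
    rw [T.act_inv_act, T.act_act] at h1
    rw [h1, dsymm, hfix]
  -- scaling
  have dscale : ∀ a b : T.V, dinf (f.vmap a) (f.vmap b) = lam * dinf a b := by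
    intro a b
    have h1 := hlim (f.vmap a) (f.vmap b)
    have heq : (fun n : ℕ =>
          T.walkLen (T.geodesic (f.vmap^[n] (f.vmap a)) (f.vmap^[n] (f.vmap b))) / lam ^ n)
        = fun n : ℕ =>
          lam * (T.walkLen (T.geodesic (f.vmap^[n + 1] a) (f.vmap^[n + 1] b)) / lam ^ (n + 1)) := by
      funext n
      rw [← Function.iterate_succ_apply f.vmap n a, ← Function.iterate_succ_apply f.vmap n b,
        pow_succ]
      field_simp
    rw [heq] at h1
    have h2 : Filter.Tendsto (fun n : ℕ =>
          lam * (T.walkLen (T.geodesic (f.vmap^[n + 1] a) (f.vmap^[n + 1] b)) / lam ^ (n + 1)))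
        Filter.atTop (nhds (lam * dinf a b)) := by
      apply Filter.Tendsto.const_mul
      exact (hlim a b).comp (Filter.tendsto_add_atTop_nat 1)
    exact tendsto_nhds_unique h1 h2
  have diter : ∀ (n : ℕ) (a b : T.V), dinf (f.vmap^[n] a) (f.vmap^[n] b) = lam ^ n * dinf a b := by
    intro n
    induction n with
    | zero => intro a b; simp
    | succ n ih =>
      intro a b
      rw [Function.iterate_succ_apply', Function.iterate_succ_apply', dscale, ih, pow_succ]
      ring
  -- every vertex is a translate of an endpoint of an edge representative
  have hS : ∀ v : T.V, ∃ (g : G) (i : Fin m),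
      v = T.act g (e i).fst ∨ v = T.act g (e i).snd := by
    intro v
    have hne : ∃ w : T.V, w ≠ v := by
      by_contra hc
      push_neg at hc
      exact hT.nontrivial_action ⟨v, fun g => hc _⟩
    obtain ⟨w, hw⟩ := hne
    obtain ⟨pw⟩ := T.isTree.isConnected.preconnected v w
    have hadj : ∃ z, T.graph.Adj v z := by
      cases pw with
      | nil => exact absurd rfl hw
      | cons h q => exact ⟨_, h⟩
    obtain ⟨z, hz⟩ := hadj
    obtain ⟨i, hi, _⟩ := hreps ⟨(v, z), hz⟩
    obtain ⟨g, hg | hg⟩ := hi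
    · exact ⟨g, i, Or.inl (congrArg (fun d : T.graph.Dart => d.fst) hg).symm⟩
    · exact ⟨g, i, Or.inr (congrArg (fun d : T.graph.Dart => d.snd) hg).symm⟩
  -- global boundedness of dinf
  set B : ℝ := ∑ i : Fin m, (dinf (e i).fst x + dinf (e i).snd x) with hB
  have hBi : ∀ i : Fin m, dinf (e i).fst x ≤ B ∧ dinf (e i).snd x ≤ B := by
    intro i
    have hsum : dinf (e i).fst x + dinf (e i).snd x ≤ B :=
      Finset.single_le_sum (f := fun i => dinf (e i).fst x + dinf (e i).snd x)
        (fun j _ => add_nonneg (dnonneg _ _) (dnonneg _ _)) (Finset.mem_univ i)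
    constructor
    · have := dnonneg (e i).snd x; linarith
    · have := dnonneg (e i).fst x; linarith
  have hnear : ∀ v : T.V, ∃ g : G, dinf v (T.act g x) ≤ B := by
    intro v
    obtain ⟨g, i, hv | hv⟩ := hS v
    · exact ⟨g, by rw [hv, dact]; exact (hBi i).1⟩
    · exact ⟨g, by rw [hv, dact]; exact (hBi i).2⟩
  have hbound : ∀ a b : T.V, dinf a b ≤ 2 * B := by
    intro a b
    obtain ⟨g1, h1⟩ := hnear a
    obtain ⟨g2, h2⟩ := hnear b
    have h3 := dtri a (T.act g1 x) b
    have h4 := dtri (T.act g1 x) (T.act g2 x) b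
    have h5 : dinf (T.act g2 x) b = dinf b (T.act g2 x) := dsymm _ _
    have h6 := hfix2 g1 g2
    linarith
  -- the limit pseudometric vanishes identically
  have hzero : ∀ a b : T.V, dinf a b = 0 := by
    intro a b
    by_contra hne0
    have hpos : 0 < dinf a b := lt_of_le_of_ne (dnonneg a b) (Ne.symm hne0)
    obtain ⟨n, hn⟩ := pow_unbounded_of_one_lt ((2 * B) / dinf a b) hlam
    have h1 : dinf (f.vmap^[n] a) (f.vmap^[n] b) ≤ 2 * B := hbound _ _
    rw [diter] at h1
    rw [div_lt_iff₀ hpos] at hn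
    linarith
  -- Perron–Frobenius contradiction
  have hm : Nonempty (Fin m) := by
    obtain ⟨v0⟩ := T.isTree.isConnected.nonempty
    obtain ⟨g, i, _⟩ := hS v0
    exact ⟨i⟩
  obtain ⟨i0⟩ := hm
  haveI : Nonempty (Fin m) := ⟨i0⟩
  set L : Fin m → ℝ := fun i => T.len (e i).fst (e i).snd with hL
  set Lmin : ℝ := Finset.univ.inf' Finset.univ_nonempty L with hLmin
  have hLpos : 0 < Lmin := by
    rw [hLmin, Finset.lt_inf'_iff]
    intro i _
    exact T.len_pos (e i).adj
  have hLle : ∀ d : T.graph.Dart, Lmin ≤ T.len d.fst d.snd := by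
    intro d
    obtain ⟨i, hi, _⟩ := hreps d
    have hlen : T.len d.fst d.snd = L i := by
      obtain ⟨g, hg | hg⟩ := hi
      · rw [← hg]
        exact T.act_len g _ _
      · have hd : d = (T.dartAct g (e i)).symm := by rw [hg, SimpleGraph.Dart.symm_symm]
        rw [hd]
        show T.len (T.act g (e i).snd) (T.act g (e i).fst) = _
        rw [T.act_len, T.len_symm]
    rw [hlen, hLmin]
    exact Finset.inf'_le L (Finset.mem_univ i)
  set A : Matrix (Fin m) (Fin m) ℝ := transitionMatrix f e with hAdef
  -- the per-edge rescaled lengths tend to 0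
  have hs0 : ∀ j : Fin m, Filter.Tendsto (fun n : ℕ =>
        T.walkLen (T.geodesic (f.vmap^[n] (e j).fst) (f.vmap^[n] (e j).snd)) / lam ^ n)
      Filter.atTop (nhds 0) := by
    intro j
    have := hlim (e j).fst (e j).snd
    rwa [hzero] at this
  -- the iterated image of an edge is a geodesic
  have hgeo : ∀ (n : ℕ) (j : Fin m),
      T.geodesic (f.vmap^[n] (e j).fst) (f.vmap^[n] (e j).snd)
        = f.mapWalkIter n (edgeWalk T (e j)) := by
    intro n j
    exact (T.geodesic_unique _ (T.reduced_isPath _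
      (f.reduced_of_legal (f.legalWalk_mapWalkIter hf n _ (f.legalWalk_edgeWalk (e j)))))).symm
  -- matrix powers count crossings, bounded by geodesic length
  have hentry : ∀ (n : ℕ) (i j : Fin m), (A ^ n) i j
      ≤ T.walkLen (T.geodesic (f.vmap^[n] (e j).fst) (f.vmap^[n] (e j).snd)) / Lmin := by
    intro n i j
    have hc := f.countP_mapWalkIter hreps n (edgeWalk T (e j)) i
    have hbasis : (fun j' =>
          (((edgeWalk T (e j)).darts.countP fun d => decide (T.SameEdgeOrbit (e j') d) : ℕ) : ℝ))
        = (Pi.single j 1 : Fin m → ℝ) := by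
      funext j'
      exact WeakRep.countP_edgeWalk' hreps j' j
    rw [hbasis] at hc
    simp only [Matrix.mulVec_single_one, Matrix.col_apply, mul_one] at hc
    have h1 : ((f.mapWalkIter n (edgeWalk T (e j))).darts.countP
          fun d => decide (T.SameEdgeOrbit (e i) d) : ℝ)
        ≤ ((f.mapWalkIter n (edgeWalk T (e j))).darts.length : ℝ) := by
      exact_mod_cast List.countP_le_length
    have h2 : Lmin * ((f.mapWalkIter n (edgeWalk T (e j))).darts.length : ℝ)
        ≤ T.walkLen (f.mapWalkIter n (edgeWalk T (e j))) :=
      T.length_le_walkLen _ Lmin (fun d _ => hLle d)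
    rw [hgeo n j, ← hc]
    rw [le_div_iff₀ hLpos]
    calc ((f.mapWalkIter n (edgeWalk T (e j))).darts.countP
            fun d => decide (T.SameEdgeOrbit (e i) d) : ℝ) * Lmin
        ≤ ((f.mapWalkIter n (edgeWalk T (e j))).darts.length : ℝ) * Lmin := by
          exact mul_le_mul_of_nonneg_right h1 hLpos.le
      _ ≤ T.walkLen (f.mapWalkIter n (edgeWalk T (e j))) := by rw [mul_comm]; exact h2
  -- eigenvector iterate
  have heig : ∀ n : ℕ, (A ^ n).mulVec uPF = fun i => lam ^ n * uPF i := by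
    intro n
    induction n with
    | zero =>
      funext i
      rw [pow_zero, Matrix.one_mulVec, pow_zero, one_mul]
    | succ n ih =>
      rw [pow_succ', ← Matrix.mulVec_mulVec, ih]
      funext i
      have hsm : (fun i => lam ^ n * uPF i) = lam ^ n • uPF := by
        funext i'
        simp [Pi.smul_apply, smul_eq_mul]
      rw [hsm, Matrix.mulVec_smul, huPF]
      simp only [Pi.smul_apply, smul_eq_mul]
      rw [pow_succ]
      ring
  -- the quantitative contradiction
  have hkey : ∀ n : ℕ, uPF i0 ≤ (∑ j,
      (T.walkLen (T.geodesic (f.vmap^[n] (e j).fst) (f.vmap^[n] (e j).snd)) / lam ^ n) * uPF j)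
      / Lmin := by
    intro n
    have h1 : lam ^ n * uPF i0 = ∑ j, (A ^ n) i0 j * uPF j := by
      have h := congrFun (heig n) i0
      rw [← h]
      simp [Matrix.mulVec, dotProduct]
    have h2 : ∑ j, (A ^ n) i0 j * uPF j
        ≤ ∑ j, (T.walkLen (T.geodesic (f.vmap^[n] (e j).fst) (f.vmap^[n] (e j).snd)) / Lmin)
            * uPF j := by
      apply Finset.sum_le_sum
      intro j _
      exact mul_le_mul_of_nonneg_right (hentry n i0 j) (hupos j).le
    have h3 : lam ^ n * uPF i0
        ≤ (∑ j, T.walkLen (T.geodesic (f.vmap^[n] (e j).fst) (f.vmap^[n] (e j).snd)) * uPF j)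
            / Lmin := by
      rw [h1]
      calc ∑ j, (A ^ n) i0 j * uPF j
          ≤ ∑ j, (T.walkLen (T.geodesic (f.vmap^[n] (e j).fst) (f.vmap^[n] (e j).snd)) / Lmin)
              * uPF j := h2
        _ = (∑ j, T.walkLen (T.geodesic (f.vmap^[n] (e j).fst) (f.vmap^[n] (e j).snd)) * uPF j)
              / Lmin := by
            rw [Finset.sum_div]
            apply Finset.sum_congr rfl
            intro j _
            rw [div_mul_eq_mul_div]
    have h4 : (∑ j,
        (T.walkLen (T.geodesic (f.vmap^[n] (e j).fst) (f.vmap^[n] (e j).snd)) / lam ^ n) * uPF j)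
        / Lmin
        = ((∑ j, T.walkLen (T.geodesic (f.vmap^[n] (e j).fst) (f.vmap^[n] (e j).snd)) * uPF j)
            / Lmin) / lam ^ n := by
      have hsum2 : (∑ j,
          (T.walkLen (T.geodesic (f.vmap^[n] (e j).fst) (f.vmap^[n] (e j).snd)) / lam ^ n)
            * uPF j)
          = (∑ j, T.walkLen (T.geodesic (f.vmap^[n] (e j).fst) (f.vmap^[n] (e j).snd)) * uPF j)
              / lam ^ n := by
        rw [Finset.sum_div]
        exact Finset.sum_congr rfl fun j _ => div_mul_eq_mul_div _ _ _
      rw [hsum2, div_div, div_div, mul_comm]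
    rw [h4, le_div_iff₀ (hlamn n), mul_comm]
    exact h3
  have hR : Filter.Tendsto (fun n : ℕ => (∑ j,
      (T.walkLen (T.geodesic (f.vmap^[n] (e j).fst) (f.vmap^[n] (e j).snd)) / lam ^ n) * uPF j)
      / Lmin) Filter.atTop (nhds 0) := by
    have hsum : Filter.Tendsto (fun n : ℕ => ∑ j,
        (T.walkLen (T.geodesic (f.vmap^[n] (e j).fst) (f.vmap^[n] (e j).snd)) / lam ^ n) * uPF j)
        Filter.atTop (nhds (∑ j : Fin m, 0 * uPF j)) := by
      apply tendsto_finset_sum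
      intro j _
      exact (hs0 j).mul_const (uPF j)
    simp only [zero_mul, Finset.sum_const_zero] at hsum
    have := hsum.div_const Lmin
    rwa [zero_div] at this
  have hfinal : uPF i0 ≤ 0 := ge_of_tendsto' hR hkey
  exact absurd hfinal (not_le.2 (hupos i0))

end RelTT
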